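/- For n ≥ 3, the polynomial ring C[u,v] is a free module over its subalgebra R = C[uv, u^n + v^n] with free basis {1, u, u^2, …, u^n, v, v^2, …, v^{n−1}} (a basis of 2n elements). -/

import Mathlib

open MvPolynomial

set_option synthInstance.maxHeartbeats 1000000
set_option maxHeartbeats 1000000

noncomputable section
namespace DihedralFreeAux

open AddMonoidAlgebra

abbrev S := AddMonoidAlgebra (Polynomial ℂ) ℤ

def Qn (n : ℕ) : S :=
  single (n : ℤ) 1 + single (-(n : ℤ)) (Polynomial.X ^ n)

lemma mul_Qn_apply (n : ℕ) (f : S) (x : ℤ) :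
    (f * Qn n).coeff x = f.coeff (x - n) + f.coeff (x + n) * Polynomial.X ^ n := by
  rw [Qn, mul_add, AddMonoidAlgebra.coeff_add, Finsupp.add_apply, AddMonoidAlgebra.coeff_mul_single_apply,
    AddMonoidAlgebra.coeff_mul_single_apply, mul_one, ← sub_eq_add_neg, neg_neg]

lemma Qn_pow_apply_ne (n : ℕ) (hn : 0 < n) (k : ℕ) :
    ∀ x : ℤ, (∀ z : ℤ, x = n * z → z < -(k:ℤ) ∨ (k:ℤ) < z) → (Qn n ^ k).coeff x = 0 := by
  induction k with
  | zero =>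
    intro x hx
    have hx0 : x ≠ 0 := by
      intro h
      rcases hx 0 (by simp [h]) with h' | h' <;> simp at h'
    rw [pow_zero, AddMonoidAlgebra.one_def]
    exact Finsupp.single_eq_of_ne' (fun h => hx0 h.symm)
  | succ k ih =>
    intro x hx
    rw [pow_succ, mul_Qn_apply, ih (x - n) ?_, ih (x + n) ?_, zero_mul, add_zero]
    · intro z hz
      have hx' := hx (z - 1) (by rw [mul_sub, mul_one, ← hz]; ring)
      push_cast at hx' ⊢; omega
    · intro z hz
      have hx' := hx (z + 1) (by rw [mul_add, mul_one, ← hz]; ring)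
      push_cast at hx' ⊢; omega

lemma Qn_pow_apply_top (n : ℕ) (hn : 0 < n) (k : ℕ) :
    (Qn n ^ k).coeff ((n : ℤ) * k) = 1 := by
  induction k with
  | zero =>
    rw [pow_zero, AddMonoidAlgebra.one_def]
    simp only [Nat.cast_zero, mul_zero]
    exact Finsupp.single_eq_same
  | succ k ih =>
    rw [pow_succ, mul_Qn_apply]
    have h1 : (n:ℤ) * (k+1 : ℕ) - n = (n:ℤ) * k := by push_cast; ring
    have h2 : (n:ℤ) * (k+1 : ℕ) + n = (n:ℤ) * ((k:ℤ) + 2) := by push_cast; ring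
    rw [h1, h2, ih, Qn_pow_apply_ne n hn k _ ?_, zero_mul, add_zero]
    intro z hz
    have hz' : (k:ℤ) + 2 = z :=
      mul_left_cancel₀ (a := (n:ℤ)) (by exact_mod_cast hn.ne') hz
    right; omega

lemma Qn_pow_apply_bot (n : ℕ) (hn : 0 < n) (k : ℕ) :
    (Qn n ^ k).coeff (-((n : ℤ) * k)) = Polynomial.X ^ (n * k) := by
  induction k with
  | zero =>
    rw [pow_zero, AddMonoidAlgebra.one_def]
    simp only [Nat.cast_zero, mul_zero, neg_zero, AddMonoidAlgebra.coeff_single]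
    rw [Finsupp.single_eq_same]
    simp
  | succ k ih =>
    rw [pow_succ, mul_Qn_apply]
    have h1 : -((n:ℤ) * (k+1 : ℕ)) - n = (n:ℤ) * (-((k:ℤ) + 2)) := by push_cast; ring
    have h2 : -((n:ℤ) * (k+1 : ℕ)) + n = -((n:ℤ) * k) := by push_cast; ring
    have hsupp : (Qn n ^ k).coeff ((n:ℤ) * -((k:ℤ) + 2)) = 0 := by
      apply Qn_pow_apply_ne n hn k
      intro z hz
      have hz' : -((k:ℤ) + 2) = z :=
        mul_left_cancel₀ (a := (n:ℤ)) (by exact_mod_cast hn.ne') hz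
      left; omega
    rw [h1, h2, ih, hsupp, zero_add, ← pow_add, Nat.mul_succ]


def EH (n : ℕ) (H : Polynomial (Polynomial ℂ)) : S :=
  Polynomial.eval₂ AddMonoidAlgebra.singleZeroRingHom (Qn n) H

lemma EH_apply (n : ℕ) (H : Polynomial (Polynomial ℂ)) {N : ℕ} (hN : H.natDegree < N) (x : ℤ) :
    (EH n H).coeff x = ∑ k ∈ Finset.range N, H.coeff k * (Qn n ^ k).coeff x := by
  rw [EH, Polynomial.eval₂_eq_sum_range' _ hN, AddMonoidAlgebra.coeff_sum, Finsupp.finset_sum_apply]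
  refine Finset.sum_congr rfl fun k _ => ?_
  show (AddMonoidAlgebra.single (0:ℤ) (H.coeff k) * Qn n ^ k).coeff x = _
  rw [AddMonoidAlgebra.coeff_single_mul_apply, neg_zero, zero_add]

lemma EH_apply_not_dvd (n : ℕ) (hn : 0 < n) (H : Polynomial (Polynomial ℂ)) (x : ℤ)
    (hx : ¬ (n:ℤ) ∣ x) : (EH n H).coeff x = 0 := by
  rw [EH_apply n H (Nat.lt_succ_self _)]
  refine Finset.sum_eq_zero fun k _ => ?_
  rw [Qn_pow_apply_ne n hn k x fun z hz => absurd ⟨z, hz⟩ hx, mul_zero]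

lemma pair_lemma (n : ℕ) (hn : 0 < n) (a b : Polynomial (Polynomial ℂ))
    (w₁ w₂ : Polynomial ℂ) (hw₁ : w₁ ≠ 0) (hw₂ : w₂ ≠ 0)
    (h : ∀ k : ℤ, (EH n a).coeff ((n:ℤ) * k) * w₁ + (EH n b).coeff ((n:ℤ) * k - n) * w₂ = 0) :
    a = 0 ∧ b = 0 := by
  set D := max a.natDegree b.natDegree + 1 with hD
  have hDa : a.natDegree < D := by omega
  have hDb : b.natDegree < D := by omega
  have key : ∀ m : ℕ, ∀ k : ℕ, D ≤ k + m → a.coeff k = 0 ∧ b.coeff k = 0 := by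
    intro m
    induction m with
    | zero =>
      intro k hk
      constructor <;> exact Polynomial.coeff_eq_zero_of_natDegree_lt (by omega)
    | succ m ih =>
      intro k hk
      by_cases hk' : D ≤ k + m
      · exact ih k hk'
      have iha : ∀ k' : ℕ, k < k' → a.coeff k' = 0 := fun k' h' => (ih k' (by omega)).1
      have ihb : ∀ k' : ℕ, k < k' → b.coeff k' = 0 := fun k' h' => (ih k' (by omega)).2
      have hcancel : ∀ w z : ℤ, (n:ℤ) * w = (n:ℤ) * z → w = z := fun w z hwz =>
        mul_left_cancel₀ (by exact_mod_cast hn.ne') hwz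
      -- a.coeff k = 0, using coordinate at -k
      have ha : a.coeff k = 0 := by
        have h1 := h (-(k:ℤ))
        have e1 : (EH n a).coeff ((n:ℤ) * (-(k:ℤ))) = a.coeff k * Polynomial.X ^ (n * k) := by
          rw [EH_apply n a hDa]
          rw [Finset.sum_eq_single k]
          · have : (n:ℤ) * (-(k:ℤ)) = -((n:ℤ) * k) := by ring
            rw [this, Qn_pow_apply_bot n hn]
          · intro k' _ hk'ne
            rcases lt_or_gt_of_ne hk'ne with hlt | hgt
            · rw [Qn_pow_apply_ne n hn k' _ ?_, mul_zero]
              intro z hz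
              have := hcancel _ _ hz
              left; omega
            · rw [iha k' hgt, zero_mul]
          · intro hcontra
            exact absurd (Finset.mem_range.mpr (by omega)) hcontra
        have e2 : (EH n b).coeff ((n:ℤ) * (-(k:ℤ)) - n) = 0 := by
          rw [EH_apply n b hDb]
          refine Finset.sum_eq_zero fun k' _ => ?_
          by_cases hk'k : k' ≤ k
          · rw [Qn_pow_apply_ne n hn k' _ ?_, mul_zero]
            intro z hz
            have : (n:ℤ) * (-(k:ℤ) - 1) = (n:ℤ) * z := by rw [← hz]; ring
            have := hcancel _ _ this
            left; omega
          · rw [ihb k' (by omega), zero_mul]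
        rw [e1, e2, zero_mul, add_zero] at h1
        rcases mul_eq_zero.mp h1 with h2 | h2
        · rcases mul_eq_zero.mp h2 with h3 | h3
          · exact h3
          · exact absurd h3 (pow_ne_zero _ Polynomial.X_ne_zero)
        · exact absurd h2 hw₁
      -- b.coeff k = 0, using coordinate at k+1
      have hb : b.coeff k = 0 := by
        have h1 := h ((k:ℤ) + 1)
        have e1 : (EH n a).coeff ((n:ℤ) * ((k:ℤ) + 1)) = 0 := by
          rw [EH_apply n a hDa]
          refine Finset.sum_eq_zero fun k' _ => ?_
          by_cases hk'k : k' ≤ k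
          · rw [Qn_pow_apply_ne n hn k' _ ?_, mul_zero]
            intro z hz
            have := hcancel _ _ hz
            right; omega
          · rw [iha k' (by omega), zero_mul]
        have e2 : (EH n b).coeff ((n:ℤ) * ((k:ℤ) + 1) - n) = b.coeff k := by
          have heq : (n:ℤ) * ((k:ℤ) + 1) - n = (n:ℤ) * k := by ring
          rw [heq, EH_apply n b hDb]
          rw [Finset.sum_eq_single k]
          · rw [Qn_pow_apply_top n hn, mul_one]
          · intro k' _ hk'ne
            rcases lt_or_gt_of_ne hk'ne with hlt | hgt
            · rw [Qn_pow_apply_ne n hn k' _ ?_, mul_zero]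
              intro z hz
              have := hcancel _ _ hz
              right; omega
            · rw [ihb k' hgt, zero_mul]
          · intro hcontra
            exact absurd (Finset.mem_range.mpr (by omega)) hcontra
        rw [e1, e2, zero_mul, zero_add] at h1
        rcases mul_eq_zero.mp h1 with h2 | h2
        · exact h2
        · exact absurd h2 hw₂
      exact ⟨ha, hb⟩
  constructor
  · exact Polynomial.ext fun k => by simpa using (key D k (by omega)).1
  · exact Polynomial.ext fun k => by simpa using (key D k (by omega)).2


abbrev P2 := MvPolynomial (Fin 2) ℂ

def pgen : P2 := X 0 * X 1
def qgen (n : ℕ) : P2 := X 0 ^ n + X 1 ^ n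

def iota : Polynomial ℂ →+* P2 := Polynomial.eval₂RingHom MvPolynomial.C pgen

def Phi (n : ℕ) : Polynomial (Polynomial ℂ) →+* P2 := Polynomial.eval₂RingHom iota (qgen n)

def psi : P2 →ₐ[ℂ] S :=
  MvPolynomial.aeval
    ![AddMonoidAlgebra.single (1 : ℤ) (1 : Polynomial ℂ),
      AddMonoidAlgebra.single (-1 : ℤ) (Polynomial.X : Polynomial ℂ)]

lemma psi_C (a : ℂ) :
    psi (MvPolynomial.C a) = AddMonoidAlgebra.single (0:ℤ) (Polynomial.C a) := by
  simp [psi, AddMonoidAlgebra.coe_algebraMap, Polynomial.algebraMap_eq]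

lemma psi_X0 : psi (X 0) = AddMonoidAlgebra.single (1 : ℤ) (1 : Polynomial ℂ) := by
  simp [psi]

lemma psi_X1 : psi (X 1) = AddMonoidAlgebra.single (-1 : ℤ) (Polynomial.X : Polynomial ℂ) := by
  simp [psi]

lemma psi_X0_pow (i : ℕ) :
    psi (X 0 ^ i) = AddMonoidAlgebra.single (i : ℤ) (1 : Polynomial ℂ) := by
  rw [map_pow, psi_X0, AddMonoidAlgebra.single_pow]
  simp

lemma psi_X1_pow (j : ℕ) :
    psi (X 1 ^ j) = AddMonoidAlgebra.single (-(j : ℤ)) (Polynomial.X ^ j : Polynomial ℂ) := by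
  rw [map_pow, psi_X1, AddMonoidAlgebra.single_pow]
  simp

lemma psi_pgen : psi pgen = AddMonoidAlgebra.single (0 : ℤ) (Polynomial.X : Polynomial ℂ) := by
  rw [pgen, map_mul, psi_X0, psi_X1, AddMonoidAlgebra.single_mul_single]
  norm_num

lemma psi_qgen (n : ℕ) : psi (qgen n) = Qn n := by
  rw [qgen, map_add, psi_X0_pow, psi_X1_pow, Qn]

lemma psi_comp_iota : (psi.toRingHom.comp iota) = AddMonoidAlgebra.singleZeroRingHom := by
  apply Polynomial.ringHom_ext
  · intro a
    show psi (iota (Polynomial.C a)) = _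
    rw [iota, Polynomial.coe_eval₂RingHom, Polynomial.eval₂_C]
    rw [psi_C]
    rfl
  · show psi (iota Polynomial.X) = _
    rw [iota, Polynomial.coe_eval₂RingHom, Polynomial.eval₂_X]
    rw [psi_pgen]
    rfl

lemma psi_Phi (n : ℕ) (H : Polynomial (Polynomial ℂ)) : psi (Phi n H) = EH n H := by
  show psi.toRingHom (Phi n H) = EH n H
  rw [Phi, Polynomial.coe_eval₂RingHom, Polynomial.hom_eval₂, psi_comp_iota]
  show Polynomial.eval₂ _ (psi (qgen n)) H = _
  rw [psi_qgen, EH]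

lemma exists_rep (n : ℕ) (c : P2) (hc : c ∈ Algebra.adjoin ℂ ({pgen, qgen n} : Set P2)) :
    ∃ H : Polynomial (Polynomial ℂ), Phi n H = c := by
  induction hc using Algebra.adjoin_induction with
  | mem x hx =>
    rcases hx with hx | hx
    · exact ⟨Polynomial.C Polynomial.X, by
        rw [hx, Phi, Polynomial.coe_eval₂RingHom, Polynomial.eval₂_C, iota,
          Polynomial.coe_eval₂RingHom, Polynomial.eval₂_X]⟩
    · exact ⟨Polynomial.X, by
        rw [Set.mem_singleton_iff.mp hx, Phi, Polynomial.coe_eval₂RingHom, Polynomial.eval₂_X]⟩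
  | algebraMap r =>
    exact ⟨Polynomial.C (Polynomial.C r), by
      rw [Phi, Polynomial.coe_eval₂RingHom, Polynomial.eval₂_C, iota,
        Polynomial.coe_eval₂RingHom, Polynomial.eval₂_C]
      rfl⟩
  | add x y hx hy ihx ihy =>
    obtain ⟨Hx, hHx⟩ := ihx
    obtain ⟨Hy, hHy⟩ := ihy
    exact ⟨Hx + Hy, by rw [map_add, hHx, hHy]⟩
  | mul x y hx hy ihx ihy =>
    obtain ⟨Hx, hHx⟩ := ihx
    obtain ⟨Hy, hHy⟩ := ihy
    exact ⟨Hx * Hy, by rw [map_mul, hHx, hHy]⟩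


def bfun (n : ℕ) : Fin (n+1) ⊕ Fin (n-1) → P2 :=
  Sum.elim (fun i => (X 0 : P2) ^ (i:ℕ)) fun j => (X 1 : P2) ^ ((j:ℕ)+1)

def zfun (n : ℕ) : Fin (n+1) ⊕ Fin (n-1) → ℤ :=
  Sum.elim (fun i => ((i:ℕ) : ℤ)) fun j => -(((j:ℕ) : ℤ)+1)

def wfun (n : ℕ) : Fin (n+1) ⊕ Fin (n-1) → Polynomial ℂ :=
  Sum.elim (fun _ => 1) fun j => Polynomial.X ^ ((j:ℕ)+1)

lemma psi_bfun (n : ℕ) (e : Fin (n+1) ⊕ Fin (n-1)) :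
    psi (bfun n e) = AddMonoidAlgebra.single (zfun n e) (wfun n e) := by
  rcases e with i | j
  · simp only [bfun, zfun, wfun, Sum.elim_inl]
    exact psi_X0_pow i
  · simp only [bfun, zfun, wfun, Sum.elim_inr]
    rw [psi_X1_pow]
    congr 1

lemma zfun_bound (n : ℕ) (hn : 3 ≤ n) (e : Fin (n+1) ⊕ Fin (n-1)) :
    -(n:ℤ)+1 ≤ zfun n e ∧ zfun n e ≤ n := by
  rcases e with i | j <;> simp only [zfun, Sum.elim_inl, Sum.elim_inr]
  · have := i.isLt; omega
  · have := j.isLt; omega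

lemma zfun_inj (n : ℕ) : Function.Injective (zfun n) := by
  rintro (i | j) (i' | j') h <;> simp only [zfun, Sum.elim_inl, Sum.elim_inr] at h
  · exact congrArg Sum.inl (Fin.ext (by omega))
  · exfalso; omega
  · exfalso; omega
  · exact congrArg Sum.inr (Fin.ext (by omega))

lemma wfun_ne (n : ℕ) (e : Fin (n+1) ⊕ Fin (n-1)) : wfun n e ≠ 0 := by
  rcases e with i | j
  · simp [wfun]
  · simp only [wfun, Sum.elim_inr]
    exact pow_ne_zero _ Polynomial.X_ne_zero

lemma indep (n : ℕ) (hn : 3 ≤ n) :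
    LinearIndependent (Algebra.adjoin ℂ ({pgen, qgen n} : Set P2)) (bfun n) := by
  classical
  rw [linearIndependent_iff]
  intro l hl
  rw [Finsupp.linearCombination_apply] at hl
  replace hl := (Finsupp.sum_fintype l (fun i a => a • bfun n i)
    (fun e => by simp)).symm.trans hl
  have hrel : ∑ e : Fin (n+1) ⊕ Fin (n-1), ((l e : P2) * bfun n e) = 0 := by
    rw [← hl]
    refine Finset.sum_congr rfl fun e _ => ?_
    rw [Subalgebra.smul_def, smul_eq_mul]
  choose Hf hHf using fun e => exists_rep n _ (l e).2
  have hS : ∑ e : Fin (n+1) ⊕ Fin (n-1),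
      EH n (Hf e) * AddMonoidAlgebra.single (zfun n e) (wfun n e) = (0 : S) := by
    calc ∑ e : Fin (n+1) ⊕ Fin (n-1),
        EH n (Hf e) * AddMonoidAlgebra.single (zfun n e) (wfun n e)
        = psi (∑ e : Fin (n+1) ⊕ Fin (n-1), ((l e : P2) * bfun n e)) := by
          rw [map_sum]
          refine Finset.sum_congr rfl fun e _ => ?_
          rw [map_mul, ← hHf e, psi_Phi, psi_bfun]
      _ = 0 := by rw [hrel, map_zero]
  have master : ∀ (zl : ℤ) (elow eup : Fin (n+1) ⊕ Fin (n-1)), zfun n elow = zl →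
      zfun n eup = zl + n → -(n:ℤ)+1 ≤ zl → zl ≤ 0 → Hf elow = 0 ∧ Hf eup = 0 := by
    intro zl elow eup hlow hup hzl1 hzl2
    have hne : elow ≠ eup := by
      intro h; rw [h, hup] at hlow; omega
    refine pair_lemma n (by omega) (Hf elow) (Hf eup) (wfun n elow) (wfun n eup)
      (wfun_ne n elow) (wfun_ne n eup) ?_
    intro k
    have h0 := congrArg (fun s : S => s.coeff (zl + n*k)) hS
    simp only [AddMonoidAlgebra.coeff_zero, Finsupp.zero_apply] at h0
    rw [AddMonoidAlgebra.coeff_sum, Finsupp.finset_sum_apply] at h0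
    rw [← Finset.sum_sdiff (Finset.subset_univ ({elow, eup} : Finset _))] at h0
    have hrest : ∑ e ∈ (Finset.univ \ ({elow, eup} : Finset _)),
        (EH n (Hf e) * AddMonoidAlgebra.single (zfun n e) (wfun n e)).coeff (zl + n*k) = 0 := by
      refine Finset.sum_eq_zero fun e he => ?_
      rw [Finset.mem_sdiff, Finset.mem_insert, Finset.mem_singleton] at he
      have he1 : e ≠ elow := fun h => he.2 (Or.inl h)
      have he2 : e ≠ eup := fun h => he.2 (Or.inr h)
      rw [AddMonoidAlgebra.coeff_mul_single_apply]
      rw [EH_apply_not_dvd n (by omega) _ _ ?_, zero_mul]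
      rintro ⟨d, hd⟩
      have hd' : zl - zfun n e = (n:ℤ) * (d - k) := by linear_combination hd
      have hb := zfun_bound n hn e
      have hc0 : (-2 : ℤ) < d - k := by
        refine lt_of_mul_lt_mul_left ?_ (by positivity : (0:ℤ) ≤ n)
        rw [← hd']
        omega
      have hc1 : d - k < 1 := by
        refine lt_of_mul_lt_mul_left ?_ (by positivity : (0:ℤ) ≤ n)
        rw [← hd']
        omega
      have : d - k = 0 ∨ d - k = -1 := by omega
      rcases this with h' | h'
      · rw [h', mul_zero] at hd'
        exact he1 (zfun_inj n (by rw [hlow]; omega))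
      · rw [h'] at hd'
        exact he2 (zfun_inj n (by rw [hup]; omega))
    rw [hrest, zero_add] at h0
    rw [Finset.sum_insert (by simpa using hne), Finset.sum_singleton] at h0
    rw [AddMonoidAlgebra.coeff_mul_single_apply, AddMonoidAlgebra.coeff_mul_single_apply, hlow, hup] at h0
    have e1 : zl + (n:ℤ)*k - zl = (n:ℤ)*k := by ring
    have e2 : zl + (n:ℤ)*k - (zl + n) = (n:ℤ)*k - n := by ring
    rw [← sub_eq_add_neg, ← sub_eq_add_neg, e1, e2] at h0
    exact h0
  have hall : ∀ e, Hf e = 0 := by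
    rintro (i | j)
    · rcases Nat.lt_or_ge (i : ℕ) 1 with hi | hi
      · refine (master 0 (Sum.inl i) (Sum.inl ⟨n, by omega⟩) ?_ ?_ (by omega) (by omega)).1
        · simp only [zfun, Sum.elim_inl]; omega
        · simp only [zfun, Sum.elim_inl]; omega
      · rcases Nat.lt_or_ge (i : ℕ) n with hi2 | hi2
        · refine (master ((i:ℤ) - n) (Sum.inr ⟨n - 1 - (i:ℕ), by omega⟩) (Sum.inl i) ?_ ?_
            (by omega) (by omega)).2
          · simp only [zfun, Sum.elim_inr]
            have : ((n - 1 - (i:ℕ) : ℕ) : ℤ) = (n:ℤ) - 1 - (i:ℕ) := by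
              have := i.isLt; push_cast; omega
            omega
          · simp only [zfun, Sum.elim_inl]; omega
        · have hi3 : (i : ℕ) = n := by have := i.isLt; omega
          refine (master 0 (Sum.inl ⟨0, by omega⟩) (Sum.inl i) ?_ ?_ (by omega) (by omega)).2
          · simp only [zfun, Sum.elim_inl]; omega
          · simp only [zfun, Sum.elim_inl]; omega
    · refine (master (-(((j:ℕ):ℤ)+1)) (Sum.inr j) (Sum.inl ⟨n - 1 - (j:ℕ), by omega⟩) rfl ?_
        (by have := j.isLt; omega) (by omega)).1
      simp only [zfun, Sum.elim_inl]
      have hj := j.isLt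
      have : ((n - 1 - (j:ℕ) : ℕ) : ℤ) = (n:ℤ) - 1 - (j:ℕ) := by push_cast; omega
      omega
  refine Finsupp.ext fun e => ?_
  rw [Finsupp.zero_apply]
  refine Subtype.ext ?_
  show (l e : P2) = 0
  rw [← hHf e, hall e, map_zero]


lemma span_top (n : ℕ) (hn : 3 ≤ n) :
    ⊤ ≤ Submodule.span (Algebra.adjoin ℂ ({pgen, qgen n} : Set P2)) (Set.range (bfun n)) := by
  classical
  set Rs := Algebra.adjoin ℂ ({pgen, qgen n} : Set P2) with hRs
  set Sp := Submodule.span Rs (Set.range (bfun n)) with hSp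
  have hmul : ∀ g ∈ Rs, ∀ x ∈ Sp, g * x ∈ Sp := by
    intro g hg x hx
    have := Sp.smul_mem (⟨g, hg⟩ : Rs) hx
    rwa [Subalgebra.smul_def, smul_eq_mul] at this
  have hpR : pgen ∈ Rs := Algebra.subset_adjoin (by simp)
  have hqR : qgen n ∈ Rs := Algebra.subset_adjoin (by simp)
  have hCR : ∀ a : ℂ, MvPolynomial.C a ∈ Rs := by
    intro a
    rw [← MvPolynomial.algebraMap_eq]
    exact Subalgebra.algebraMap_mem _ a
  have h1 : (1 : P2) ∈ Sp := by
    refine Submodule.subset_span ⟨Sum.inl ⟨0, by omega⟩, ?_⟩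
    simp [bfun]
  have hXn : (X 0 : P2)^n ∈ Sp :=
    Submodule.subset_span ⟨Sum.inl ⟨n, by omega⟩, by simp [bfun]⟩
  have hu : ∀ c : ℕ, (X 0 : P2)^c ∈ Sp ∧ (X 1 : P2)^c ∈ Sp := by
    intro c
    induction c using Nat.strong_induction_on with
    | _ c ih =>
    rcases le_or_gt c n with hc | hc
    · constructor
      · exact Submodule.subset_span ⟨Sum.inl ⟨c, by omega⟩, by simp [bfun]⟩
      · rcases Nat.eq_zero_or_pos c with hc0 | hc0
        · rw [hc0, pow_zero]; exact h1
        rcases Nat.lt_or_ge c n with hcn | hcn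
        · refine Submodule.subset_span ⟨Sum.inr ⟨c - 1, by omega⟩, ?_⟩
          simp only [bfun, Sum.elim_inr]
          congr 1
          omega
        · have hcn' : c = n := by omega
          subst hcn'
          have hid : (X 1 : P2)^c = qgen c * 1 - (X 0)^c := by rw [qgen]; ring
          rw [hid]
          exact Submodule.sub_mem _ (hmul _ hqR _ h1) hXn
    · rcases le_or_gt (2*n) c with hc2 | hc2
      · obtain ⟨a, ha⟩ : ∃ a, c = 2*n + a := ⟨c - 2*n, by omega⟩
        have idu : (X 0 : P2)^c = qgen n * (X 0)^(n+a) - pgen^n * (X 0)^a := by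
          subst ha; rw [qgen, pgen]; ring
        have idv : (X 1 : P2)^c = qgen n * (X 1)^(n+a) - pgen^n * (X 1)^a := by
          subst ha; rw [qgen, pgen]; ring
        constructor
        · rw [idu]
          exact Submodule.sub_mem _ (hmul _ hqR _ (ih (n+a) (by omega)).1)
            (hmul _ (pow_mem hpR n) _ (ih a (by omega)).1)
        · rw [idv]
          exact Submodule.sub_mem _ (hmul _ hqR _ (ih (n+a) (by omega)).2)
            (hmul _ (pow_mem hpR n) _ (ih a (by omega)).2)
      · obtain ⟨a, m, ha, hm⟩ : ∃ a m, c = n + a ∧ n = a + m :=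
          ⟨c - n, 2*n - c, by omega, by omega⟩
        have idu : (X 0 : P2)^c = qgen n * (X 0)^a - pgen^a * (X 1)^m := by
          rw [ha, hm, qgen, pgen]; ring
        have idv : (X 1 : P2)^c = qgen n * (X 1)^a - pgen^a * (X 0)^m := by
          rw [ha, hm, qgen, pgen]; ring
        constructor
        · rw [idu]
          exact Submodule.sub_mem _ (hmul _ hqR _ (ih a (by omega)).1)
            (hmul _ (pow_mem hpR a) _ (ih m (by omega)).2)
        · rw [idv]
          exact Submodule.sub_mem _ (hmul _ hqR _ (ih a (by omega)).2)
            (hmul _ (pow_mem hpR a) _ (ih m (by omega)).1)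
  have hmono : ∀ a b : ℕ, (X 0 : P2)^a * (X 1)^b ∈ Sp := by
    intro a b
    rcases le_or_gt b a with h | h
    · obtain ⟨d, hd⟩ : ∃ d, a = b + d := ⟨a - b, by omega⟩
      have hid : (X 0 : P2)^a * (X 1)^b = pgen^b * (X 0)^d := by
        subst hd; rw [pgen]; ring
      rw [hid]
      exact hmul _ (pow_mem hpR b) _ (hu d).1
    · obtain ⟨d, hd⟩ : ∃ d, b = a + d := ⟨b - a, by omega⟩
      have hid : (X 0 : P2)^a * (X 1)^b = pgen^a * (X 1)^d := by
        subst hd; rw [pgen]; ring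
      rw [hid]
      exact hmul _ (pow_mem hpR a) _ (hu d).2
  suffices hall : ∀ f : P2, f ∈ Sp by intro f _; exact hall f
  intro f
  induction f using MvPolynomial.induction_on' with
  | monomial d a =>
    have hid : (monomial d a : P2) = MvPolynomial.C a * ((X 0)^(d 0) * (X 1)^(d 1)) := by
      rw [monomial_eq, Finsupp.prod_fintype _ _ (fun i => pow_zero _), Fin.prod_univ_two]
    rw [hid]
    exact hmul _ (hCR a) _ (hmono (d 0) (d 1))
  | add p q hp hq => exact Submodule.add_mem _ hp hq

end DihedralFreeAux


/-- For `n ≥ 3`, `ℂ[u,v]` is a free module over `R = ℂ[uv, uⁿ+vⁿ]` with free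
basis `{1, u, …, uⁿ, v, v², …, v^{n−1}}` (of `2n` elements, indexed by
`Fin (n+1) ⊕ Fin (n-1)`). -/
theorem polynomial_free_over_dihedral_invariants (n : ℕ) (hn : 3 ≤ n) :
    ∃ B : Module.Basis (Fin (n + 1) ⊕ Fin (n - 1))
        ↥(Algebra.adjoin ℂ
            ({X 0 * X 1, X 0 ^ n + X 1 ^ n} : Set (MvPolynomial (Fin 2) ℂ)))
        (MvPolynomial (Fin 2) ℂ),
      ⇑B = Sum.elim (fun i : Fin (n + 1) => (X 0 : MvPolynomial (Fin 2) ℂ) ^ (i : ℕ))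
        (fun j : Fin (n - 1) => (X 1 : MvPolynomial (Fin 2) ℂ) ^ ((j : ℕ) + 1)) := by
  refine ⟨Module.Basis.mk (DihedralFreeAux.indep n hn) (DihedralFreeAux.span_top n hn), ?_⟩
  exact Module.Basis.coe_mk _ _
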